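/- arXiv:2011.02823 — 7 statements merged into one kernel-verified Lean document; each statement's English description precedes it below -/
import Mathlib

section
/- Let ξ ∈ ℝ with ξ ≠ 0 and let η ∈ ℝ satisfy η ≥ −(1+ξ²)/2. For every (n₀, φ) ∈ ℝ × ℝ with h(ξ, n₀, φ) = η, the square of the phase-derivative of h satisfies (4 n₀(1−n₀) cos φ sin φ)² = 16 ξ (n₀ − z₀)(n₀ − z₊)(n₀ − z₋). In particular, along any solution of Hamilton's equations with energy η one has (dn₀/dτ)² = 16 ξ (n₀ − z₀)(n₀ − z₊)(n₀ − z₋). -/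
/-- Dimensionless mean-field Hamiltonian of a ferromagnetic spin-1 BEC with
zero magnetization. -/
noncomputable def hmf (ξ n₀ φ : ℝ) : ℝ :=
  ξ * (1 - 2 * n₀) - 2 * n₀ * (1 - n₀) * Real.cos φ ^ 2

theorem stmt_7 (ξ η : ℝ) (hξ : ξ ≠ 0) (hη : -(1 + ξ ^ 2) / 2 ≤ η)
    (z₀ zp zm : ℝ) (hz0 : z₀ = (1 - η / ξ) / 2)
    (hzp : zp = (1 + ξ + Real.sqrt (1 + ξ ^ 2 + 2 * η)) / 2)
    (hzm : zm = (1 + ξ - Real.sqrt (1 + ξ ^ 2 + 2 * η)) / 2) :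
    (∀ n₀ φ : ℝ, hmf ξ n₀ φ = η →
      (4 * n₀ * (1 - n₀) * Real.cos φ * Real.sin φ) ^ 2 =
        16 * ξ * (n₀ - z₀) * (n₀ - zp) * (n₀ - zm)) ∧
    (∀ n₀ φ : ℝ → ℝ, Differentiable ℝ n₀ → Differentiable ℝ φ →
      (∀ τ, deriv n₀ τ =
        4 * n₀ τ * (1 - n₀ τ) * Real.cos (φ τ) * Real.sin (φ τ)) →
      (∀ τ, deriv φ τ =
        2 * ξ + 2 * (1 - 2 * n₀ τ) * Real.cos (φ τ) ^ 2) →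
      hmf ξ (n₀ 0) (φ 0) = η →
      ∀ τ, (deriv n₀ τ) ^ 2 =
        16 * ξ * (n₀ τ - z₀) * (n₀ τ - zp) * (n₀ τ - zm)) := by
  have hs : Real.sqrt (1 + ξ ^ 2 + 2 * η) ^ 2 = 1 + ξ ^ 2 + 2 * η :=
    Real.sq_sqrt (by nlinarith)
  have hz0' : 2 * ξ * z₀ = ξ - η := by rw [hz0]; field_simp
  have part1 : ∀ n₀ φ : ℝ, hmf ξ n₀ φ = η →
      (4 * n₀ * (1 - n₀) * Real.cos φ * Real.sin φ) ^ 2 =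
        16 * ξ * (n₀ - z₀) * (n₀ - zp) * (n₀ - zm) := by
    intro n₀ φ heq
    unfold hmf at heq
    have hpy := Real.sin_sq_add_cos_sq φ
    subst hzp hzm
    set s := Real.sqrt (1 + ξ ^ 2 + 2 * η)
    set c := Real.cos φ
    linear_combination (16 * (n₀ * (1 - n₀)) ^ 2 * c ^ 2) * hpy
      + (4 * ξ * (n₀ - z₀)) * hs
      + (8 * (n₀ ^ 2 - (1 + ξ) * n₀ + (ξ - η) / 2)) * hz0'
      + (8 * (n₀ * (1 - n₀) * c ^ 2 + (ξ * (1 - 2 * n₀) - η) / 2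
          - n₀ * (1 - n₀))) * heq
  refine ⟨part1, ?_⟩
  intro n₀ φ hdn hdφ hodn hodφ h0 τ
  -- energy conservation
  have hE : ∀ t, HasDerivAt (fun t => hmf ξ (n₀ t) (φ t)) 0 t := by
    intro t
    have hn : HasDerivAt n₀ (deriv n₀ t) t := (hdn t).hasDerivAt
    have hp : HasDerivAt φ (deriv φ t) t := (hdφ t).hasDerivAt
    have hcos : HasDerivAt (fun u => Real.cos (φ u))
        (-Real.sin (φ t) * deriv φ t) t :=
      (Real.hasDerivAt_cos (φ t)).comp t hp
    have h1 : HasDerivAt (fun u => ξ * (1 - 2 * n₀ u))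
        (ξ * (0 - 2 * deriv n₀ t)) t :=
      ((hasDerivAt_const t (1 : ℝ)).sub (hn.const_mul 2)).const_mul ξ
    have h2 : HasDerivAt (fun u => 2 * n₀ u * (1 - n₀ u) * Real.cos (φ u) ^ 2)
        ((2 * deriv n₀ t * (1 - n₀ t) + 2 * n₀ t * (0 - deriv n₀ t)) *
          Real.cos (φ t) ^ 2 +
          2 * n₀ t * (1 - n₀ t) *
            (2 * Real.cos (φ t) ^ 1 * (-Real.sin (φ t) * deriv φ t))) t := by
      exact ((hn.const_mul 2).mul ((hasDerivAt_const t (1 : ℝ)).sub hn)).mul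
        (hcos.pow 2)
    have h3 := h1.sub h2
    have : (ξ * (0 - 2 * deriv n₀ t) -
        ((2 * deriv n₀ t * (1 - n₀ t) + 2 * n₀ t * (0 - deriv n₀ t)) *
          Real.cos (φ t) ^ 2 +
          2 * n₀ t * (1 - n₀ t) *
            (2 * Real.cos (φ t) ^ 1 * (-Real.sin (φ t) * deriv φ t)))) = 0 := by
      rw [hodn t, hodφ t]; ring
    rw [this] at h3
    exact h3.congr_deriv rfl |>.congr_of_eventuallyEq (by
      filter_upwards with u; unfold hmf; simp only [Pi.sub_apply])
  have hconst : ∀ t, hmf ξ (n₀ t) (φ t) = η := by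
    intro t
    have hdiff : Differentiable ℝ fun t => hmf ξ (n₀ t) (φ t) :=
      fun u => (hE u).differentiableAt
    have := is_const_of_deriv_eq_zero hdiff (fun u => (hE u).deriv) t 0
    rw [this, h0]
  have := part1 (n₀ τ) (φ τ) (hconst τ)
  rw [hodn τ]
  exact this
end

section
/- Let ξ ∈ ℝ with 0 < |ξ| < 1 and let η ∈ ℝ with −(1+ξ²)/2 ≤ η < −|ξ| (the BA′ excited-state quantum phase). Then: if ξ > 0 the roots satisfy z₋ ≤ z₊ ≤ z₀, and if ξ < 0 they satisfy z₀ ≤ z₋ ≤ z₊. -/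
theorem stmt_9 (ξ η : ℝ) (hξ : 0 < |ξ|) (hξ1 : |ξ| < 1)
    (hη1 : -(1 + ξ ^ 2) / 2 ≤ η) (hη2 : η < -|ξ|)
    (z₀ zp zm : ℝ) (hz0 : z₀ = (1 - η / ξ) / 2)
    (hzp : zp = (1 + ξ + Real.sqrt (1 + ξ ^ 2 + 2 * η)) / 2)
    (hzm : zm = (1 + ξ - Real.sqrt (1 + ξ ^ 2 + 2 * η)) / 2) :
    (0 < ξ → zm ≤ zp ∧ zp ≤ z₀) ∧ (ξ < 0 → z₀ ≤ zm ∧ zm ≤ zp) := by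
  have hpos : (0:ℝ) ≤ 1 + ξ ^ 2 + 2 * η := by nlinarith
  set s := Real.sqrt (1 + ξ ^ 2 + 2 * η) with hs
  have hs0 : 0 ≤ s := Real.sqrt_nonneg _
  have hs2 : s ^ 2 = 1 + ξ ^ 2 + 2 * η := Real.sq_sqrt hpos
  constructor
  · intro hξp
    have habs : |ξ| = ξ := abs_of_pos hξp
    rw [habs] at hξ1 hη2
    have hξne : ξ ≠ 0 := ne_of_gt hξp
    have hd : η / ξ * ξ = η := div_mul_cancel₀ η hξne
    have hsum : η + ξ ^ 2 < 0 := by nlinarith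
    have key : ξ * s ≤ -(η + ξ ^ 2) := by
      nlinarith [mul_nonneg hξp.le hs0, hs2, sq_nonneg (η + ξ), mul_pos hξp hξp]
    constructor
    · rw [hzm, hzp]; linarith
    · rw [hzp, hz0]
      nlinarith [key, hd]
  · intro hξn
    have habs : |ξ| = -ξ := abs_of_neg hξn
    rw [habs] at hξ1 hη2
    have hξne : ξ ≠ 0 := ne_of_lt hξn
    have hd : η / ξ * ξ = η := div_mul_cancel₀ η hξne
    have hsum : η + ξ ^ 2 < 0 := by nlinarith
    have key : ξ ^ 2 + η ≤ ξ * s := by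
      nlinarith [mul_nonneg (neg_nonneg.2 hξn.le) hs0, hs2, sq_nonneg (η - ξ), mul_pos (neg_pos.2 hξn) (neg_pos.2 hξn)]
    constructor
    · rw [hz0, hzm]
      nlinarith [key, hd]
    · rw [hzm, hzp]; linarith
end

section
/- Let ξ ∈ (0,1) and η ∈ (−ξ, ξ) (the P′ excited-state quantum phase). Then the projection of the energy level set onto the n₀-axis is the closed interval [z₋, z₀]: {n₀ ∈ [0,1] : ∃ φ ∈ ℝ, h(ξ, n₀, φ) = η} = [z₋, z₀], where z₀ = (1 − η/ξ)/2 and z₋ = (1 + ξ − √(1+ξ²+2η))/2. -/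
theorem stmt_10 (ξ η : ℝ) (hξ : ξ ∈ Set.Ioo (0 : ℝ) 1)
    (hη : η ∈ Set.Ioo (-ξ) ξ) :
    {n₀ : ℝ | n₀ ∈ Set.Icc (0 : ℝ) 1 ∧ ∃ φ : ℝ, hmf ξ n₀ φ = η} =
      Set.Icc ((1 + ξ - Real.sqrt (1 + ξ ^ 2 + 2 * η)) / 2) ((1 - η / ξ) / 2) := by
  obtain ⟨hξ0, hξ1⟩ := hξ
  obtain ⟨hη1, hη2⟩ := hη
  have hD : (0:ℝ) ≤ 1 + ξ ^ 2 + 2 * η := by nlinarith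
  set s := Real.sqrt (1 + ξ ^ 2 + 2 * η) with hsdef
  have hs2 : s ^ 2 = 1 + ξ ^ 2 + 2 * η := Real.sq_sqrt hD
  have hs0 : 0 ≤ s := Real.sqrt_nonneg _
  have hsgt : 1 - ξ < s := by
    rw [hsdef]
    exact (Real.lt_sqrt (by linarith)).mpr (by nlinarith)
  have hslt : s < 1 + ξ := by
    rw [hsdef]
    exact (Real.sqrt_lt' (by linarith)).mpr (by nlinarith)
  have hq : η / ξ * ξ = η := div_mul_cancel₀ η hξ0.ne'
  ext n
  simp only [Set.mem_setOf_eq, Set.mem_Icc, hmf]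
  constructor
  · rintro ⟨⟨h0, h1⟩, φ, hφ⟩
    have hc0 : 0 ≤ Real.cos φ ^ 2 := sq_nonneg _
    have hc1 : Real.cos φ ^ 2 ≤ 1 := by
      nlinarith [Real.neg_one_le_cos φ, Real.cos_le_one φ]
    have hn : 0 ≤ n * (1 - n) := by nlinarith
    have hquad : 2 * n ^ 2 - 2 * (1 + ξ) * n + ξ - η ≤ 0 := by
      nlinarith [mul_nonneg hn (by linarith : (0:ℝ) ≤ 1 - Real.cos φ ^ 2)]
    constructor
    · -- z₋ ≤ n
      nlinarith [hs2, hquad, mul_pos (by linarith : (0:ℝ) < 1 + ξ + s - 2 * n)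
        (by linarith : (0:ℝ) < s)]
    · -- n ≤ z₀
      have key : 2 * ξ * n ≤ ξ - η := by
        nlinarith [mul_nonneg hn hc0]
      nlinarith [hq, mul_pos hξ0 hξ0]
  · rintro ⟨ha, hb⟩
    have hn0 : 0 < n := by linarith
    have hn1 : n < 1 := by nlinarith [hq]
    have hden : 0 < 2 * n * (1 - n) := by nlinarith
    have hnum : 0 ≤ ξ * (1 - 2 * n) - η := by nlinarith [hq]
    set t := (ξ * (1 - 2 * n) - η) / (2 * n * (1 - n)) with htdef
    have ht0 : 0 ≤ t := div_nonneg hnum hden.le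
    have ht1 : t ≤ 1 := by
      rw [htdef, div_le_one hden]
      nlinarith [hs2, mul_nonpos_of_nonneg_of_nonpos
        (by linarith : (0:ℝ) ≤ 2 * n - (1 + ξ - s))
        (by linarith : 2 * n - (1 + ξ + s) ≤ 0)]
    refine ⟨⟨hn0.le, hn1.le⟩, Real.arccos (Real.sqrt t), ?_⟩
    have hcos : Real.cos (Real.arccos (Real.sqrt t)) = Real.sqrt t :=
      Real.cos_arccos (by linarith [Real.sqrt_nonneg t])
        (Real.sqrt_le_one.mpr ht1)
    rw [hcos, Real.sq_sqrt ht0, htdef, mul_div_cancel₀ _ hden.ne']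
    ring
end

section
/- Let ξ ∈ (0,1) and η ∈ (−(1+ξ²)/2, −ξ) (the BA′ excited-state quantum phase). Then the projection of the energy level set onto the n₀-axis is the closed interval [z₋, z₊]: {n₀ ∈ [0,1] : ∃ φ ∈ ℝ, h(ξ, n₀, φ) = η} = [z₋, z₊], where z± = (1 + ξ ± √(1+ξ²+2η))/2. -/
theorem stmt_11 (ξ η : ℝ) (hξ : ξ ∈ Set.Ioo (0 : ℝ) 1)
    (hη : η ∈ Set.Ioo (-(1 + ξ ^ 2) / 2) (-ξ)) :
    {n₀ : ℝ | n₀ ∈ Set.Icc (0 : ℝ) 1 ∧ ∃ φ : ℝ, hmf ξ n₀ φ = η} =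
      Set.Icc ((1 + ξ - Real.sqrt (1 + ξ ^ 2 + 2 * η)) / 2)
        ((1 + ξ + Real.sqrt (1 + ξ ^ 2 + 2 * η)) / 2) := by
  obtain ⟨hξ0, hξ1⟩ := hξ
  obtain ⟨hη1, hη2⟩ := hη
  set s := Real.sqrt (1 + ξ ^ 2 + 2 * η) with hs_def
  have hA : (0:ℝ) < 1 + ξ ^ 2 + 2 * η := by nlinarith
  have hs2 : s ^ 2 = 1 + ξ ^ 2 + 2 * η := Real.sq_sqrt hA.le
  have hspos : 0 < s := Real.sqrt_pos.mpr hA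
  have hslt : s < 1 - ξ := by
    rw [hs_def, show (1:ℝ) - ξ = Real.sqrt ((1-ξ)^2) by
      rw [Real.sqrt_sq (by linarith)]]
    exact Real.sqrt_lt_sqrt hA.le (by nlinarith)
  ext n₀
  simp only [Set.mem_setOf_eq, Set.mem_Icc]
  constructor
  · rintro ⟨⟨h0, h1⟩, φ, hφ⟩
    unfold hmf at hφ
    have hc1 : Real.cos φ ^ 2 ≤ 1 := Real.cos_sq_le_one φ
    have hQ : 2*n₀^2 - 2*(1+ξ)*n₀ + ξ - η ≤ 0 := by
      nlinarith [mul_nonneg (mul_nonneg h0 (by linarith : (0:ℝ) ≤ 1 - n₀))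
        (by linarith : (0:ℝ) ≤ 1 - Real.cos φ ^ 2)]
    constructor
    · nlinarith [sq_nonneg (2*n₀ - 1 - ξ + s), hspos, hQ, hs2]
    · nlinarith [sq_nonneg (2*n₀ - 1 - ξ - s), hspos, hQ, hs2]
  · rintro ⟨hl, hr⟩
    have hn0 : 0 < n₀ := by nlinarith
    have hn1 : n₀ < 1 := by nlinarith
    have hQ : 2*n₀^2 - 2*(1+ξ)*n₀ + ξ - η ≤ 0 := by
      nlinarith [mul_nonneg (by linarith : (0:ℝ) ≤ 2*n₀ - 1 - ξ + s)
        (by linarith : (0:ℝ) ≤ 1 + ξ + s - 2*n₀), hs2]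
    have hden : 0 < 2 * n₀ * (1 - n₀) := by nlinarith
    have hnum0 : 0 ≤ ξ * (1 - 2*n₀) - η := by
      nlinarith [mul_nonneg hξ0.le (by linarith : (0:ℝ) ≤ (1+ξ+s)/2 - n₀),
        mul_pos hξ0 (by linarith : (0:ℝ) < 1 - ξ - s)]
    have hnum1 : ξ * (1 - 2*n₀) - η ≤ 2 * n₀ * (1 - n₀) := by nlinarith
    set c := (ξ * (1 - 2*n₀) - η) / (2 * n₀ * (1 - n₀)) with hc_def
    have hc0 : 0 ≤ c := div_nonneg hnum0 hden.le
    have hc1 : c ≤ 1 := (div_le_one hden).mpr hnum1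
    refine ⟨⟨hn0.le, hn1.le⟩, Real.arccos (Real.sqrt c), ?_⟩
    unfold hmf
    have hcos : Real.cos (Real.arccos (Real.sqrt c)) = Real.sqrt c :=
      Real.cos_arccos (by linarith [Real.sqrt_nonneg c]) (Real.sqrt_le_one.mpr hc1)
    rw [hcos, Real.sq_sqrt hc0, hc_def, mul_div_cancel₀ _ hden.ne']
    ring
end

section
/- Let ξ ∈ (0,1) and η ∈ (−ξ, ξ) (the P′ excited-state quantum phase). Then the energy level set L = {(n₀, θ) ∈ [0,1] × (ℝ/2πℤ) : h(ξ, n₀, φ) = η for any representative φ ∈ ℝ of θ} is a connected subset of [0,1] × (ℝ/2πℤ); in particular, above the critical energy η⋆ = −ξ there is a single phase-space trajectory per energy. -/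
theorem stmt_12 (ξ η : ℝ) (hξ : ξ ∈ Set.Ioo (0 : ℝ) 1)
    (hη : η ∈ Set.Ioo (-ξ) ξ) :
    IsConnected {p : ℝ × AddCircle (2 * Real.pi) |
      p.1 ∈ Set.Icc (0 : ℝ) 1 ∧
      ∀ φ : ℝ, (φ : AddCircle (2 * Real.pi)) = p.2 → hmf ξ p.1 φ = η} := by
  obtain ⟨hξ0, hξ1⟩ := hξ
  obtain ⟨hη1, hη2⟩ := hη
  set r : ℝ → ℝ := fun c => (ξ - η) / (ξ + c + Real.sqrt (ξ^2 + c^2 + 2*c*η)) with hrdef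
  have hDnn : ∀ c : ℝ, 0 ≤ c → (0:ℝ) ≤ ξ^2 + c^2 + 2*c*η := by
    intro c hc; nlinarith [sq_nonneg (ξ - c), mul_nonneg hc (by linarith : (0:ℝ) ≤ ξ + η)]
  have hsnn : ∀ c : ℝ, 0 ≤ Real.sqrt (ξ^2 + c^2 + 2*c*η) := fun c => Real.sqrt_nonneg _
  have hs2 : ∀ c : ℝ, 0 ≤ c → (Real.sqrt (ξ^2 + c^2 + 2*c*η))^2 = ξ^2 + c^2 + 2*c*η := by
    intro c hc; exact Real.sq_sqrt (hDnn c hc)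
  have hsge : ∀ c : ℝ, 0 ≤ c → ξ - c ≤ Real.sqrt (ξ^2 + c^2 + 2*c*η) ∧
      c - ξ ≤ Real.sqrt (ξ^2 + c^2 + 2*c*η) := by
    intro c hc
    constructor
    · nlinarith [hs2 c hc, hsnn c, mul_nonneg hc (by linarith : (0:ℝ) ≤ ξ + η),
        sq_nonneg (Real.sqrt (ξ^2 + c^2 + 2*c*η) - (ξ - c))]
    · nlinarith [hs2 c hc, hsnn c, mul_nonneg hc (by linarith : (0:ℝ) ≤ ξ + η),
        sq_nonneg (Real.sqrt (ξ^2 + c^2 + 2*c*η) - (c - ξ))]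
  have hApos : ∀ c : ℝ, 0 ≤ c → 0 < ξ + c + Real.sqrt (ξ^2 + c^2 + 2*c*η) := by
    intro c hc; have := hsnn c; linarith
  have hrA : ∀ c : ℝ, 0 ≤ c →
      r c * (ξ + c + Real.sqrt (ξ^2 + c^2 + 2*c*η)) = ξ - η := by
    intro c hc
    simp only [hrdef]
    exact div_mul_cancel₀ _ (hApos c hc).ne'
  have h2cr : ∀ c : ℝ, 0 ≤ c →
      2 * c * r c = ξ + c - Real.sqrt (ξ^2 + c^2 + 2*c*η) := by
    intro c hc
    have hA := hApos c hc
    apply mul_right_cancel₀ hA.ne'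
    have h2 := hs2 c hc
    have h1 := hrA c hc
    linear_combination 2 * c * h1 + h2
  have hrmem : ∀ c : ℝ, 0 ≤ c → r c ∈ Set.Icc (0:ℝ) 1 := by
    intro c hc
    have hA := hApos c hc
    constructor
    · exact div_nonneg (by linarith) hA.le
    · simp only [hrdef]
      rw [div_le_one hA]
      have := (hsge c hc).1
      linarith
  have hQr : ∀ c : ℝ, 0 ≤ c → ξ * (1 - 2 * r c) - 2 * r c * (1 - r c) * c = η := by
    intro c hc
    have h1 := hrA c hc
    have h2 := h2cr c hc
    linear_combination (-1) * h1 + r c * h2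
  have hcrlt : ∀ c : ℝ, 0 ≤ c → c * r c < ξ := by
    intro c hc
    have hA := hApos c hc
    have hge := (hsge c hc).2
    simp only [hrdef]
    rw [← mul_div_assoc, div_lt_iff₀ hA]
    nlinarith [mul_nonneg hc (by linarith : (0:ℝ) ≤ ξ + η)]
  have key : ∀ c : ℝ, 0 ≤ c → ∀ n ∈ Set.Icc (0:ℝ) 1,
      (ξ * (1 - 2 * n) - 2 * n * (1 - n) * c = η ↔ n = r c) := by
    intro c hc n hn
    obtain ⟨hn0, hn1⟩ := hn
    constructor
    · intro hQ
      have hQr' := hQr c hc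
      have hfac : (n - r c) * (ξ + c - c*n - c*(r c)) = 0 := by
        linear_combination (-(1:ℝ)/2) * hQ + ((1:ℝ)/2) * hQr'
      have hcr := hcrlt c hc
      have hsecond : 0 < ξ + c - c*n - c*(r c) := by
        have : c * n ≤ c := by nlinarith
        linarith
      rcases mul_eq_zero.mp hfac with h | h
      · linarith
      · linarith
    · intro h; rw [h]; exact hQr c hc
  set f : ℝ → ℝ × AddCircle (2 * Real.pi) :=
    fun φ => (r (Real.cos φ ^ 2), (φ : AddCircle (2 * Real.pi))) with hfdef
  have hcos : Continuous fun φ : ℝ => Real.cos φ ^ 2 := Real.continuous_cos.pow 2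
  have hcont : Continuous f := by
    apply Continuous.prodMk
    · apply Continuous.div continuous_const
      · exact (continuous_const.add hcos).add (Real.continuous_sqrt.comp
          ((continuous_const.add (hcos.pow 2)).add ((continuous_const.mul hcos).mul
            continuous_const)))
      · intro x
        exact (hApos _ (sq_nonneg _)).ne'
    · exact continuous_quotient_mk'.comp continuous_id
  have hcoseq : ∀ a b : ℝ, ((a : AddCircle (2*Real.pi)) = (b : AddCircle (2*Real.pi))) →
      Real.cos a = Real.cos b := by
    intro a b hab
    rw [QuotientAddGroup.eq_iff_sub_mem] at hab
    obtain ⟨k, hk⟩ := AddSubgroup.mem_zmultiples_iff.mp hab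
    rw [zsmul_eq_mul] at hk
    have ha : a = b + k * (2 * Real.pi) := by linarith
    rw [ha, Real.cos_add_int_mul_two_pi]
  have hrange : {p : ℝ × AddCircle (2 * Real.pi) |
      p.1 ∈ Set.Icc (0 : ℝ) 1 ∧
      ∀ φ : ℝ, (φ : AddCircle (2 * Real.pi)) = p.2 → hmf ξ p.1 φ = η} = Set.range f := by
    ext ⟨n, θ⟩
    induction θ using QuotientAddGroup.induction_on with
    | H φ =>
    simp only [Set.mem_setOf_eq, Set.mem_range, hfdef]
    constructor
    · rintro ⟨hn, hall⟩
      refine ⟨φ, ?_⟩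
      have hh := hall φ rfl
      have heq : n = r (Real.cos φ ^ 2) := by
        rw [← key (Real.cos φ ^ 2) (sq_nonneg _) n hn]
        simpa [hmf] using hh
      simp [heq]
    · rintro ⟨ψ, hψ⟩
      rw [Prod.mk.injEq] at hψ
      obtain ⟨h1, h2⟩ := hψ
      refine ⟨h1 ▸ hrmem _ (sq_nonneg _), ?_⟩
      intro χ hχ
      have hcc : Real.cos χ = Real.cos ψ := hcoseq χ ψ (by rw [hχ, h2])
      rw [hmf, hcc, ← h1]
      exact hQr _ (sq_nonneg _)
  rw [hrange]
  exact isConnected_range hcont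
end

section
/- Let ξ ∈ (0,1) and η ∈ (−(1+ξ²)/2, −ξ) (the BA′ excited-state quantum phase). Then the energy level set L = {(n₀, θ) ∈ [0,1] × (ℝ/2πℤ) : h(ξ, n₀, φ) = η for any representative φ ∈ ℝ of θ} has exactly two connected components; i.e., below the critical energy η⋆ = −ξ each energy hypersurface consists of two disconnected phase-space trajectories. -/
open Set Real

/-- If a space is split by a clopen set into two preconnected nonempty pieces,
it has exactly two connected components. -/
lemma card_components_eq_two {X : Type*} [TopologicalSpace X] {U : Set X}
    (hclopen : IsClopen U) (hU : IsPreconnected U) (hUc : IsPreconnected Uᶜ)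
    (hne : U.Nonempty) (hne' : Uᶜ.Nonempty) :
    Nat.card (ConnectedComponents X) = 2 := by
  obtain ⟨u, hu⟩ := hne
  obtain ⟨v, hv⟩ := hne'
  have hcomp : ∀ x : X, x ∈ U → connectedComponent x = U := fun x hx =>
    subset_antisymm (hclopen.connectedComponent_subset hx)
      (hU.subset_connectedComponent hx)
  have hcompc : ∀ x : X, x ∉ U → connectedComponent x = Uᶜ := fun x hx =>
    subset_antisymm (hclopen.compl.connectedComponent_subset hx)
      (hUc.subset_connectedComponent hx)
  rw [Nat.card_eq_two_iff]
  refine ⟨(u : ConnectedComponents X), (v : ConnectedComponents X), ?_, ?_⟩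
  · rw [Ne, ConnectedComponents.coe_eq_coe, hcomp u hu, hcompc v hv]
    intro h
    exact (h ▸ hu : u ∈ Uᶜ) hu
  · ext z
    simp only [Set.mem_insert_iff, Set.mem_singleton_iff, Set.mem_univ, iff_true]
    obtain ⟨x, rfl⟩ := ConnectedComponents.surjective_coe z
    by_cases hx : x ∈ U
    · left
      rw [ConnectedComponents.coe_eq_coe, hcomp x hx, hcomp u hu]
    · right
      rw [ConnectedComponents.coe_eq_coe, hcompc x hx, hcompc v hv]

theorem stmt_13 (ξ η : ℝ) (hξ : ξ ∈ Set.Ioo (0 : ℝ) 1)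
    (hη : η ∈ Set.Ioo (-(1 + ξ ^ 2) / 2) (-ξ)) :
    Nat.card (ConnectedComponents
      ({p : ℝ × AddCircle (2 * Real.pi) |
        p.1 ∈ Set.Icc (0 : ℝ) 1 ∧
        ∀ φ : ℝ, (φ : AddCircle (2 * Real.pi)) = p.2 → hmf ξ p.1 φ = η} :
          Set (ℝ × AddCircle (2 * Real.pi)))) = 2 := by
  obtain ⟨hξ1, hξ2⟩ := hξ
  obtain ⟨hη1, hη2⟩ := hη
  show Nat.card (ConnectedComponents
      ({p : ℝ × Real.Angle |
        p.1 ∈ Set.Icc (0 : ℝ) 1 ∧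
        ∀ φ : ℝ, (φ : Real.Angle) = p.2 → hmf ξ p.1 φ = η} :
          Set (ℝ × Real.Angle))) = 2
  set c : Real.Angle → ℝ := Real.Angle.cos with hc
  set Q : ℝ → ℝ := fun n => 2 * n ^ 2 - 2 * (1 + ξ) * n + (ξ - η) with hQ
  set f : ℝ → ℝ := fun n => (ξ * (1 - 2 * n) - η) / (2 * n * (1 - n)) with hf
  -- basic inequalities
  have hbound : ∀ n, Q n ≤ 0 → 0 < n ∧ n < 1 := by
    intro n h
    simp only [hQ] at h
    constructor <;> nlinarith [sq_nonneg n, sq_nonneg (n - 1)]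
  have hden : ∀ n, Q n ≤ 0 → 0 < 2 * n * (1 - n) := by
    intro n h
    obtain ⟨h1, h2⟩ := hbound n h
    nlinarith
  have hnum : ∀ n, Q n ≤ 0 → 0 < ξ * (1 - 2 * n) - η := by
    intro n h
    obtain ⟨h1, h2⟩ := hbound n h
    nlinarith
  have hfpos : ∀ n, Q n ≤ 0 → 0 < f n := fun n h => div_pos (hnum n h) (hden n h)
  have hfid : ∀ n, Q n ≤ 0 → 2 * n * (1 - n) * f n = ξ * (1 - 2 * n) - η := by
    intro n h
    rw [hf]
    field_simp [(hden n h).ne', (hbound n h).1.ne', (sub_pos.2 (hbound n h).2).ne']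
  have hfle : ∀ n, Q n ≤ 0 → f n ≤ 1 := by
    intro n h
    rw [hf, div_le_one (hden n h)]
    simp only [hQ] at h
    nlinarith
  -- a point on the critical curve
  obtain ⟨nw, hnwmem, hnw⟩ : ∃ n, n ∈ Icc (0 : ℝ) ((1 + ξ) / 2) ∧ Q n = 0 := by
    have hcont : ContinuousOn Q (Icc 0 ((1 + ξ) / 2)) := by
      rw [hQ]; fun_prop
    have h0 : (0 : ℝ) ∈ Icc (Q ((1 + ξ) / 2)) (Q 0) := by
      simp only [hQ]
      constructor <;> nlinarith
    obtain ⟨n, hn, hn0⟩ :=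
      intermediate_value_Icc' (by linarith : (0 : ℝ) ≤ (1 + ξ) / 2) hcont h0
    exact ⟨n, hn, hn0⟩
  have hQnw : Q nw ≤ 0 := le_of_eq hnw
  have hfnw : f nw = 1 := by
    have h1 := hfid nw hQnw
    have hd := hden nw hQnw
    have h2 : 2 * nw * (1 - nw) * f nw = 2 * nw * (1 - nw) * 1 := by
      rw [h1]
      simp only [hQ] at hnw
      nlinarith
    exact mul_left_cancel₀ (ne_of_gt hd) h2
  -- the two halves
  set A : Set (ℝ × Real.Angle) :=
    {p | Q p.1 ≤ 0 ∧ c p.2 = Real.sqrt (f p.1)} with hA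
  set B : Set (ℝ × Real.Angle) :=
    {p | Q p.1 ≤ 0 ∧ c p.2 = -Real.sqrt (f p.1)} with hB
  set S : Set (ℝ × Real.Angle) :=
    {p : ℝ × Real.Angle | p.1 ∈ Set.Icc (0 : ℝ) 1 ∧
      ∀ φ : ℝ, (φ : Real.Angle) = p.2 → hmf ξ p.1 φ = η} with hS
  have hSmem : ∀ (n : ℝ) (θ : Real.Angle),
      ((n, θ) ∈ S) ↔ (Q n ≤ 0 ∧ (c θ) ^ 2 = f n) := by
    intro n θ
    induction θ using Real.Angle.induction_on with
    | h φ =>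
      constructor
      · rintro ⟨⟨hn0, hn1⟩, hall⟩
        have hE := hall φ rfl
        simp only [hmf] at hE
        have hcos1 : Real.cos φ ^ 2 ≤ 1 := Real.cos_sq_le_one φ
        have hQn : Q n ≤ 0 := by
          simp only [hQ]
          nlinarith [sq_nonneg (Real.cos φ),
            mul_nonneg hn0 (by linarith : (0 : ℝ) ≤ 1 - n)]
        refine ⟨hQn, ?_⟩
        rw [hc, Real.Angle.cos_coe, hf, eq_div_iff (ne_of_gt (hden n hQn))]
        linear_combination -hE
      · rintro ⟨hQn, hcos⟩
        obtain ⟨h1, h2⟩ := hbound n hQn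
        refine ⟨⟨le_of_lt h1, le_of_lt h2⟩, ?_⟩
        intro ψ hψ
        have hcψ : Real.cos ψ = Real.cos φ := by
          have h := congrArg Real.Angle.cos hψ
          rwa [Real.Angle.cos_coe, Real.Angle.cos_coe] at h
        have hcsq : Real.cos ψ ^ 2 = f n := by
          rw [hcψ]
          rw [hc, Real.Angle.cos_coe] at hcos
          exact hcos
        simp only [hmf]
        rw [hcsq]
        linarith [hfid n hQn]
  have hSAB : S = A ∪ B := by
    ext ⟨n, θ⟩
    rw [Set.mem_union, hSmem n θ]
    constructor
    · rintro ⟨hQn, hsq⟩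
      have habs : |c θ| = Real.sqrt (f n) := by
        rw [← hsq, Real.sqrt_sq_eq_abs]
      rcases abs_cases (c θ) with ⟨h1, _⟩ | ⟨h1, _⟩
      · exact Or.inl ⟨hQn, by rw [← habs, h1]⟩
      · exact Or.inr ⟨hQn, by rw [← habs, h1, neg_neg]⟩
    · rintro (⟨hQn, h⟩ | ⟨hQn, h⟩) <;> refine ⟨hQn, ?_⟩
      · rw [h, Real.sq_sqrt (le_of_lt (hfpos n hQn))]
      · rw [h, neg_pow, Real.sq_sqrt (le_of_lt (hfpos n hQn))]
        norm_num
  have hABdisj : ∀ p : ℝ × Real.Angle, p ∈ A → p ∈ B → False := by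
    rintro ⟨n, θ⟩ ⟨hQn, h1⟩ ⟨_, h2⟩
    have hs : 0 < Real.sqrt (f n) := Real.sqrt_pos.2 (hfpos n hQn)
    rw [h1] at h2
    linarith
  -- the domain is preconnected
  have hD : IsPreconnected {n : ℝ | Q n ≤ 0} := by
    have hOC : Set.OrdConnected {n : ℝ | Q n ≤ 0} := by
      constructor
      intro a ha b hb x hx
      obtain ⟨hax, hxb⟩ := hx
      simp only [Set.mem_setOf_eq, hQ] at ha hb ⊢
      rcases eq_or_lt_of_le (hax.trans hxb) with heq | hlt
      · have hxa : x = a := le_antisymm (heq ▸ hxb) hax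
        rw [hxa]; exact ha
      · nlinarith [mul_nonneg (sub_nonneg.2 hxb) (neg_nonneg.2 ha),
          mul_nonneg (sub_nonneg.2 hax) (neg_nonneg.2 hb),
          mul_nonneg (mul_nonneg (sub_nonneg.2 hax) (sub_nonneg.2 hxb))
            (le_of_lt (sub_pos.2 hlt))]
    exact hOC.isPreconnected
  -- continuity of f on the domain
  have hfc : ContinuousOn f {n : ℝ | Q n ≤ 0} := by
    rw [hf]
    apply ContinuousOn.div (by fun_prop) (by fun_prop)
    intro n hn
    exact ne_of_gt (hden n hn)
  set u : ℝ → ℝ := fun n => Real.arccos (Real.sqrt (f n)) with hu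
  have huc : ContinuousOn u {n : ℝ | Q n ≤ 0} :=
    Real.continuous_arccos.comp_continuousOn hfc.sqrt
  have hsqrt01 : ∀ n, Q n ≤ 0 →
      0 ≤ Real.sqrt (f n) ∧ Real.sqrt (f n) ≤ 1 := by
    intro n hn
    exact ⟨Real.sqrt_nonneg _, Real.sqrt_le_one.mpr (hfle n hn)⟩
  have hcosu : ∀ n, Q n ≤ 0 → Real.cos (u n) = Real.sqrt (f n) := by
    intro n hn
    obtain ⟨h0, h1⟩ := hsqrt01 n hn
    rw [hu]
    exact Real.cos_arccos (by linarith) h1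
  have hunw : u nw = 0 := by
    rw [hu]
    simp only [hfnw, Real.sqrt_one, Real.arccos_one]
  -- generic preconnected curves
  have himg : ∀ w : ℝ → ℝ, ContinuousOn w {n : ℝ | Q n ≤ 0} →
      IsPreconnected ((fun n => ((n, (↑(w n) : Real.Angle)) : ℝ × Real.Angle)) ''
        {n : ℝ | Q n ≤ 0}) := by
    intro w hw
    apply hD.image
    exact (continuous_id.continuousOn).prodMk
      (Real.Angle.continuous_coe.comp_continuousOn hw)
  -- A is preconnected
  have hApre : IsPreconnected A := by
    have hAeq : A =
        ((fun n => ((n, (↑(u n) : Real.Angle)) : ℝ × Real.Angle)) '' {n | Q n ≤ 0}) ∪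
        ((fun n => ((n, (↑(-(u n)) : Real.Angle)) : ℝ × Real.Angle)) '' {n | Q n ≤ 0}) := by
      ext p
      constructor
      · rintro ⟨hQn, hcos⟩
        have h : c p.2 = Real.cos (u p.1) := by rw [hcos, hcosu p.1 hQn]
        rcases Real.Angle.cos_eq_real_cos_iff_eq_or_eq_neg.mp h with h' | h'
        · exact Or.inl ⟨p.1, hQn, Prod.ext rfl h'.symm⟩
        · exact Or.inr ⟨p.1, hQn,
            Prod.ext rfl ((Real.Angle.coe_neg (u p.1)).trans h'.symm)⟩
      · rintro (⟨m, hm, rfl⟩ | ⟨m, hm, rfl⟩) <;> refine ⟨hm, ?_⟩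
        · show Real.Angle.cos ((u m : ℝ) : Real.Angle) = Real.sqrt (f m)
          rw [Real.Angle.cos_coe, hcosu m hm]
        · show Real.Angle.cos ((-(u m) : ℝ) : Real.Angle) = Real.sqrt (f m)
          rw [Real.Angle.cos_coe, Real.cos_neg, hcosu m hm]
    rw [hAeq]
    apply IsPreconnected.union ((nw, (0 : Real.Angle)) : ℝ × Real.Angle)
    · exact ⟨nw, hQnw, Prod.ext rfl (by show ((u nw : ℝ) : Real.Angle) = 0; rw [hunw]; exact Real.Angle.coe_zero)⟩
    · exact ⟨nw, hQnw, Prod.ext rfl (by show ((-(u nw) : ℝ) : Real.Angle) = 0; rw [hunw, neg_zero]; exact Real.Angle.coe_zero)⟩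
    · exact himg u huc
    · exact himg (fun n => -(u n)) huc.neg
  -- B is preconnected
  have hBpre : IsPreconnected B := by
    have hBeq : B =
        ((fun n => ((n, (↑(π - u n) : Real.Angle)) : ℝ × Real.Angle)) '' {n | Q n ≤ 0}) ∪
        ((fun n => ((n, (↑(-(π - u n)) : Real.Angle)) : ℝ × Real.Angle)) '' {n | Q n ≤ 0}) := by
      ext p
      constructor
      · rintro ⟨hQn, hcos⟩
        have h : c p.2 = Real.cos (π - u p.1) := by
          rw [hcos, Real.cos_pi_sub, hcosu p.1 hQn]
        rcases Real.Angle.cos_eq_real_cos_iff_eq_or_eq_neg.mp h with h' | h'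
        · exact Or.inl ⟨p.1, hQn, Prod.ext rfl h'.symm⟩
        · exact Or.inr ⟨p.1, hQn,
            Prod.ext rfl ((Real.Angle.coe_neg (π - u p.1)).trans h'.symm)⟩
      · rintro (⟨m, hm, rfl⟩ | ⟨m, hm, rfl⟩) <;> refine ⟨hm, ?_⟩
        · show Real.Angle.cos ((π - u m : ℝ) : Real.Angle) = -Real.sqrt (f m)
          rw [Real.Angle.cos_coe, Real.cos_pi_sub, hcosu m hm]
        · show Real.Angle.cos ((-(π - u m) : ℝ) : Real.Angle) = -Real.sqrt (f m)
          rw [Real.Angle.cos_coe, Real.cos_neg, Real.cos_pi_sub, hcosu m hm]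
    rw [hBeq]
    apply IsPreconnected.union ((nw, ((π : ℝ) : Real.Angle)) : ℝ × Real.Angle)
    · exact ⟨nw, hQnw, Prod.ext rfl (by show ((π - u nw : ℝ) : Real.Angle) = ((π : ℝ) : Real.Angle); rw [hunw, sub_zero])⟩
    · exact ⟨nw, hQnw, Prod.ext rfl (by
        show ((-(π - u nw) : ℝ) : Real.Angle) = ((π : ℝ) : Real.Angle)
        rw [hunw, sub_zero, Real.Angle.coe_neg, Real.Angle.neg_coe_pi])⟩
    · exact himg _ (continuousOn_const.sub huc)
    · exact himg _ (continuousOn_const.sub huc).neg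
  -- nonemptiness witnesses
  have hpA : ((nw, (0 : Real.Angle)) : ℝ × Real.Angle) ∈ A := by
    refine ⟨hQnw, ?_⟩
    rw [hfnw, Real.sqrt_one]
    exact Real.Angle.cos_zero
  have hpB : ((nw, ((π : ℝ) : Real.Angle)) : ℝ × Real.Angle) ∈ B := by
    refine ⟨hQnw, ?_⟩
    rw [hfnw, Real.sqrt_one]
    exact Real.Angle.cos_coe_pi
  -- pass to the subtype
  set U : Set S := Subtype.val ⁻¹' A with hU
  have hAS : A ⊆ S := by rw [hSAB]; exact Set.subset_union_left
  have hBS : B ⊆ S := by rw [hSAB]; exact Set.subset_union_right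
  have hUc : Uᶜ = Subtype.val ⁻¹' B := by
    ext ⟨p, hp⟩
    simp only [hU, Set.mem_compl_iff, Set.mem_preimage]
    rw [hSAB] at hp
    rcases hp with hpa | hpb
    · constructor
      · intro hna; exact absurd hpa hna
      · intro hb _; exact hABdisj p hpa hb
    · constructor
      · intro _; exact hpb
      · intro _ ha; exact hABdisj p ha hpb
  have hvalU : Subtype.val '' U = A := by
    rw [hU, Subtype.image_preimage_coe]
    exact Set.inter_eq_self_of_subset_right hAS
  have hvalUc : Subtype.val '' Uᶜ = B := by
    rw [hUc, Subtype.image_preimage_coe]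
    exact Set.inter_eq_self_of_subset_right hBS
  have hUpre : IsPreconnected U := by
    rw [← Topology.IsInducing.subtypeVal.isPreconnected_image, hvalU]
    exact hApre
  have hUcpre : IsPreconnected Uᶜ := by
    rw [← Topology.IsInducing.subtypeVal.isPreconnected_image, hvalUc]
    exact hBpre
  have hUopen : IsOpen U := by
    have : U = Subtype.val ⁻¹' {p : ℝ × Real.Angle | 0 < c p.2} := by
      ext ⟨p, hp⟩
      simp only [hU, Set.mem_preimage, Set.mem_setOf_eq]
      constructor
      · rintro ⟨hQn, hcos⟩
        rw [hcos]
        exact Real.sqrt_pos.2 (hfpos _ hQn)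
      · intro hpos
        rw [hSAB] at hp
        rcases hp with hpa | hpb
        · exact hpa
        · exfalso
          obtain ⟨hQn, hcos⟩ := hpb
          have := Real.sqrt_nonneg (f p.1)
          rw [hcos] at hpos
          linarith
    rw [this]
    exact (isOpen_lt continuous_const
      (Real.Angle.continuous_cos.comp continuous_snd)).preimage continuous_subtype_val
  have hUcopen : IsOpen Uᶜ := by
    have : Uᶜ = Subtype.val ⁻¹' {p : ℝ × Real.Angle | c p.2 < 0} := by
      rw [hUc]
      ext ⟨p, hp⟩
      simp only [Set.mem_preimage, Set.mem_setOf_eq]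
      constructor
      · rintro ⟨hQn, hcos⟩
        rw [hcos, neg_lt_zero]
        exact Real.sqrt_pos.2 (hfpos _ hQn)
      · intro hneg
        rw [hSAB] at hp
        rcases hp with hpa | hpb
        · exfalso
          obtain ⟨hQn, hcos⟩ := hpa
          have := Real.sqrt_nonneg (f p.1)
          rw [hcos] at hneg
          linarith
        · exact hpb
    rw [this]
    exact (isOpen_lt (Real.Angle.continuous_cos.comp continuous_snd)
      continuous_const).preimage continuous_subtype_val
  have hclopen : IsClopen U := ⟨isOpen_compl_iff.mp hUcopen, hUopen⟩
  have hneU : U.Nonempty := ⟨⟨_, hAS hpA⟩, hpA⟩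
  have hneUc : Uᶜ.Nonempty := by
    rw [hUc]
    exact ⟨⟨_, hBS hpB⟩, hpB⟩
  exact card_components_eq_two hclopen hUpre hUcpre hneU hneUc
end

section
/- Let ξ ∈ (0,1) and η ∈ (−ξ, ξ) (the P′ excited-state quantum phase), set x = ξ√(1+ξ²+2η), y = (x − ξ² − η)/2, and T = K(y/x)/√x. Let n₀, φ : ℝ → ℝ be differentiable with n₀(τ) ∈ [0,1] for all τ, satisfying Hamilton's equations n₀' = 4n₀(1−n₀)cosφ sinφ, φ' = 2ξ + 2(1−2n₀)cos²φ, and h(ξ, n₀(0), φ(0)) = η. Then for all τ ∈ ℝ: n₀(τ+T) = n₀(τ) and φ(τ+T) = φ(τ) + π. (The trajectory winds counterclockwise around the n₀-axis, so the winding-number order parameter is w = +1.) -/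
/-- Complete elliptic integral of the first kind,
`K m = ∫₀^{π/2} (1 - m sin²γ)^{-1/2} dγ`. -/
noncomputable def ellipticK (m : ℝ) : ℝ :=
  ∫ γ in (0 : ℝ)..(Real.pi / 2), (Real.sqrt (1 - m * Real.sin γ ^ 2))⁻¹

set_option linter.unusedVariables false

private lemma qpos {a c s : ℝ} (ha : 0 < a) (hcs : s ^ 2 = 1 - c ^ 2) :
    0 < c ^ 2 + a * s ^ 2 := by
  rcases le_or_gt (c ^ 2) (1 / 2) with h | h
  · nlinarith [sq_nonneg c, sq_nonneg s]
  · nlinarith [sq_nonneg s, mul_nonneg ha.le (sq_nonneg s)]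


private lemma lam_deriv {r : ℝ} (hr : 0 < r) (θ : ℝ) :
    HasDerivAt (fun t : ℝ => t + Real.arctan ((r - 1) * Real.sin t * Real.cos t /
        (Real.cos t ^ 2 + r * Real.sin t ^ 2)))
      (r / (Real.cos θ ^ 2 + r ^ 2 * Real.sin θ ^ 2)) θ := by
  set c := Real.cos θ with hc
  set s := Real.sin θ with hs
  have hcs : s ^ 2 = 1 - c ^ 2 := by
    have := Real.sin_sq_add_cos_sq θ; linarith
  have hP : 0 < c ^ 2 + r * s ^ 2 := qpos hr hcs
  have hQ : 0 < c ^ 2 + r ^ 2 * s ^ 2 := qpos (by positivity) hcs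
  -- derivative of the numerator
  have hN : HasDerivAt (fun t : ℝ => (r - 1) * Real.sin t * Real.cos t)
      ((r - 1) * (c ^ 2 - s ^ 2)) θ := by
    have h := ((Real.hasDerivAt_sin θ).const_mul (r - 1)).mul (Real.hasDerivAt_cos θ)
    refine h.congr_deriv (Eq.symm ?_)
    simp only [← hc, ← hs]; ring
  -- derivative of the denominator
  have hD : HasDerivAt (fun t : ℝ => Real.cos t ^ 2 + r * Real.sin t ^ 2)
      (2 * s * c * (r - 1)) θ := by
    have h := ((Real.hasDerivAt_cos θ).pow 2).add (((Real.hasDerivAt_sin θ).pow 2).const_mul r)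
    refine h.congr_deriv (Eq.symm ?_)
    simp only [← hc, ← hs]; ring
  have hB : HasDerivAt (fun t : ℝ => (r - 1) * Real.sin t * Real.cos t /
      (Real.cos t ^ 2 + r * Real.sin t ^ 2))
      (((r - 1) * (c ^ 2 - s ^ 2) * (c ^ 2 + r * s ^ 2) -
        (r - 1) * s * c * (2 * s * c * (r - 1))) / (c ^ 2 + r * s ^ 2) ^ 2) θ :=
    hN.div hD hP.ne'
  have hA := (Real.hasDerivAt_arctan ((r - 1) * s * c / (c ^ 2 + r * s ^ 2))).comp θ hB
  have h := (hasDerivAt_id θ).add hA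
  refine h.congr_deriv (Eq.symm ?_)
  have hI2 : (c ^ 2 + r * s ^ 2) ^ 2 + ((r - 1) * s * c) ^ 2 = c ^ 2 + r ^ 2 * s ^ 2 := by
    linear_combination (s ^ 2 * r ^ 2 + c ^ 2) * hcs
  have hI1 : (c ^ 2 + r ^ 2 * s ^ 2) + ((r - 1) * (c ^ 2 - s ^ 2) * (c ^ 2 + r * s ^ 2) -
      (r - 1) * s * c * (2 * s * c * (r - 1))) = r := by
    linear_combination (r + s ^ 2 * r - s ^ 2 * r ^ 2 - c ^ 2 + c ^ 2 * r) * hcs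
  have e1 : 1 + ((r - 1) * s * c / (c ^ 2 + r * s ^ 2)) ^ 2 =
      (c ^ 2 + r ^ 2 * s ^ 2) / (c ^ 2 + r * s ^ 2) ^ 2 := by
    rw [div_pow, ← hI2]
    field_simp
  rw [e1, one_div_div, div_mul_div_comm,
    mul_comm (c ^ 2 + r ^ 2 * s ^ 2) ((c ^ 2 + r * s ^ 2) ^ 2),
    mul_div_mul_left _ _ (pow_ne_zero 2 hP.ne')]
  rw [div_eq_iff hQ.ne', add_mul, one_mul, div_mul_cancel₀ _ hQ.ne']
  linear_combination -hI1

private lemma lam_cos_sq {r : ℝ} (hr : 0 < r) (θ : ℝ) :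
    Real.cos (θ + Real.arctan ((r - 1) * Real.sin θ * Real.cos θ /
        (Real.cos θ ^ 2 + r * Real.sin θ ^ 2))) ^ 2
      = Real.cos θ ^ 2 / (Real.cos θ ^ 2 + r ^ 2 * Real.sin θ ^ 2) := by
  set c := Real.cos θ with hc
  set s := Real.sin θ with hs
  have hcs : s ^ 2 = 1 - c ^ 2 := by
    have := Real.sin_sq_add_cos_sq θ; linarith
  have hP : 0 < c ^ 2 + r * s ^ 2 := qpos hr hcs
  have hQ : 0 < c ^ 2 + r ^ 2 * s ^ 2 := qpos (by positivity) hcs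
  set β := (r - 1) * s * c / (c ^ 2 + r * s ^ 2) with hβ
  have hb0 : (0:ℝ) < 1 + β ^ 2 := by positivity
  rw [Real.cos_add, Real.cos_arctan, Real.sin_arctan]
  have h1 : c * (1 / Real.sqrt (1 + β ^ 2)) - s * (β / Real.sqrt (1 + β ^ 2)) =
      (c - s * β) / Real.sqrt (1 + β ^ 2) := by ring
  rw [h1, div_pow, Real.sq_sqrt hb0.le]
  have hI2 : (c ^ 2 + r * s ^ 2) ^ 2 + ((r - 1) * s * c) ^ 2 = c ^ 2 + r ^ 2 * s ^ 2 := by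
    linear_combination (s ^ 2 * r ^ 2 + c ^ 2) * hcs
  have e1 : 1 + β ^ 2 = (c ^ 2 + r ^ 2 * s ^ 2) / (c ^ 2 + r * s ^ 2) ^ 2 := by
    rw [hβ, div_pow, ← hI2]; field_simp
  have h2 : c - s * β = c / (c ^ 2 + r * s ^ 2) := by
    rw [hβ, eq_div_iff hP.ne', sub_mul, mul_assoc s, div_mul_cancel₀ _ hP.ne']; linear_combination c * hcs
  rw [h2, e1]
  rw [div_pow, div_div_div_comm]
  rw [div_self (pow_ne_zero 2 hP.ne'), div_one]



private lemma pointwise {ξ η x y r : ℝ} (θ : ℝ) (hξ0 : 0 < ξ)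
    (hx0 : 0 < x) (hy0 : 0 < y) (hyx : y < x) (hr0 : 0 < r)
    (hxr : x = ξ ^ 2 * r ^ 2) (hA4 : ξ ^ 2 * r ^ 4 = 1 + ξ ^ 2 + 2 * η)
    (hy2 : y = (x - ξ ^ 2 - η) / 2) :
    (r / (Real.cos θ ^ 2 + r ^ 2 * Real.sin θ ^ 2)) *
      (2 * Real.sqrt (Real.cos (θ + Real.arctan ((r - 1) * Real.sin θ * Real.cos θ /
          (Real.cos θ ^ 2 + r * Real.sin θ ^ 2))) ^ 4 +
        2 * η * Real.cos (θ + Real.arctan ((r - 1) * Real.sin θ * Real.cos θ /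
          (Real.cos θ ^ 2 + r * Real.sin θ ^ 2))) ^ 2 + ξ ^ 2))⁻¹
    = (Real.sqrt x)⁻¹ * 2⁻¹ * (Real.sqrt (1 - y / x * Real.sin (2 * θ) ^ 2))⁻¹ := by
  rw [Real.sin_two_mul]
  set c := Real.cos θ with hc
  set s := Real.sin θ with hs
  have hcs : s ^ 2 = 1 - c ^ 2 := by
    have := Real.sin_sq_add_cos_sq θ; linarith
  have hQ : 0 < c ^ 2 + r ^ 2 * s ^ 2 := qpos (by positivity) hcs
  have hsc1 : (2 * s * c) ^ 2 ≤ 1 := by nlinarith [sq_nonneg (s^2 - c^2), sq_nonneg (s*c)]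
  have hW : 0 < x - y * (2 * s * c) ^ 2 := by nlinarith [sq_nonneg (2*s*c)]
  have hu : 0 < 1 - y / x * (2 * s * c) ^ 2 := by
    have : 1 - y / x * (2 * s * c) ^ 2 = (x - y * (2 * s * c) ^ 2) / x := by field_simp
    rw [this]; exact div_pos hW hx0
  have hWx : x - y * (2 * s * c) ^ 2 = x * (1 - y / x * (2 * s * c) ^ 2) := by field_simp
  rw [show Real.cos (θ + Real.arctan ((r - 1) * s * c / (c ^ 2 + r * s ^ 2))) ^ 4
      = (Real.cos (θ + Real.arctan ((r - 1) * s * c / (c ^ 2 + r * s ^ 2))) ^ 2) ^ 2 from by ring,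
    lam_cos_sq hr0 θ]
  have hNum : (c ^ 2 / (c ^ 2 + r ^ 2 * s ^ 2)) ^ 2 +
      2 * η * (c ^ 2 / (c ^ 2 + r ^ 2 * s ^ 2)) + ξ ^ 2
      = (x * (1 - y / x * (2 * s * c) ^ 2)) * (r / (c ^ 2 + r ^ 2 * s ^ 2)) ^ 2 := by
    have key : c ^ 4 + 2 * η * c ^ 2 * (c ^ 2 + r ^ 2 * s ^ 2) +
        ξ ^ 2 * (c ^ 2 + r ^ 2 * s ^ 2) ^ 2 = r ^ 2 * (x - y * (2 * s * c) ^ 2) := by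
      linear_combination (4 * c ^ 2 * s ^ 2 * r ^ 2) * hy2 +
        (-r ^ 2 + 2 * c ^ 2 * s ^ 2 * r ^ 2) * hxr +
        (ξ ^ 2 * r ^ 4 * (1 + s ^ 2 + c ^ 2)) * hcs + (-c ^ 4) * hA4
    have e1 : (c ^ 2 / (c ^ 2 + r ^ 2 * s ^ 2)) ^ 2 +
        2 * η * (c ^ 2 / (c ^ 2 + r ^ 2 * s ^ 2)) + ξ ^ 2
        = (c ^ 4 + 2 * η * c ^ 2 * (c ^ 2 + r ^ 2 * s ^ 2) +
            ξ ^ 2 * (c ^ 2 + r ^ 2 * s ^ 2) ^ 2) / (c ^ 2 + r ^ 2 * s ^ 2) ^ 2 := by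
      field_simp
    rw [e1, key, ← hWx, div_pow]
    ring
  rw [hNum]
  have hsq : x * (1 - y / x * (2 * s * c) ^ 2) * (r / (c ^ 2 + r ^ 2 * s ^ 2)) ^ 2
      = (Real.sqrt x * Real.sqrt (1 - y / x * (2 * s * c) ^ 2) *
          (r / (c ^ 2 + r ^ 2 * s ^ 2))) ^ 2 := by
    have h1 := Real.sq_sqrt hx0.le
    have h2 := Real.sq_sqrt hu.le
    linear_combination (-(Real.sqrt (1 - y / x * (2 * s * c) ^ 2) ^ 2 *
        (r / (c ^ 2 + r ^ 2 * s ^ 2)) ^ 2)) * h1 +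
      (-(x * (r / (c ^ 2 + r ^ 2 * s ^ 2)) ^ 2)) * h2
  rw [hsq, Real.sqrt_sq (by positivity)]
  have h1 : 0 < Real.sqrt x := Real.sqrt_pos.mpr hx0
  have h2 : 0 < Real.sqrt (1 - y / x * (2 * s * c) ^ 2) := Real.sqrt_pos.mpr hu
  field_simp



private lemma dpos {ξ η t : ℝ} (hξ0 : 0 < ξ) (hηξ : -ξ < η) (ht0 : 0 ≤ t) (ht1 : t ≤ 1) :
    0 < t ^ 2 + 2 * η * t + ξ ^ 2 := by
  rcases le_or_gt t (ξ / 2) with h | h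
  · nlinarith [mul_nonneg (by linarith : (0:ℝ) ≤ η + ξ) ht0, sq_nonneg (t - ξ)]
  · nlinarith [sq_nonneg (t - ξ), mul_pos (by linarith : (0:ℝ) < η + ξ) (by linarith : (0:ℝ) < t)]


set_option maxHeartbeats 1000000 in
open Real intervalIntegral in
private lemma key_integral (ξ η x y : ℝ) (hξ0 : 0 < ξ) (hξ1 : ξ < 1)
    (hη1 : -ξ < η) (hη2 : η < ξ)
    (hx : x = ξ * Real.sqrt (1 + ξ ^ 2 + 2 * η)) (hy : y = (x - ξ ^ 2 - η) / 2) :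
    (∫ ψ in (0:ℝ)..Real.pi,
        (2 * Real.sqrt (Real.cos ψ ^ 4 + 2 * η * Real.cos ψ ^ 2 + ξ ^ 2))⁻¹)
      = ellipticK (y / x) / Real.sqrt x := by
  have hA0 : 0 < 1 + ξ ^ 2 + 2 * η := by nlinarith
  have hx0 : 0 < x := by
    rw [hx]; exact mul_pos hξ0 (Real.sqrt_pos.mpr hA0)
  have hx2 : x ^ 2 = ξ ^ 2 * (1 + ξ ^ 2 + 2 * η) := by
    rw [hx, mul_pow, Real.sq_sqrt hA0.le]
  have hd : x ^ 2 - (ξ ^ 2 + η) ^ 2 = ξ ^ 2 - η ^ 2 := by linear_combination hx2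
  have hy0 : 0 < y := by
    nlinarith [mul_pos (show (0:ℝ) < ξ - η by linarith) (show (0:ℝ) < ξ + η by linarith),
      sq_nonneg (x + ξ ^ 2 + η), hx0]
  have hyx : y < x := by
    nlinarith [mul_pos (show (0:ℝ) < ξ - η by linarith) (show (0:ℝ) < ξ + η by linarith),
      sq_nonneg (x - ξ ^ 2 - η), hx0]
  set r := Real.sqrt x / ξ with hrdef
  have hr0 : 0 < r := div_pos (Real.sqrt_pos.mpr hx0) hξ0
  have hxr : x = ξ ^ 2 * r ^ 2 := by
    rw [hrdef, div_pow, Real.sq_sqrt hx0.le]; field_simp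
  have h4 : ξ ^ 4 * r ^ 4 = ξ ^ 2 * (1 + ξ ^ 2 + 2 * η) := by
    linear_combination (-(x + ξ ^ 2 * r ^ 2)) * hxr + hx2
  have hA4 : ξ ^ 2 * r ^ 4 = 1 + ξ ^ 2 + 2 * η := by
    apply mul_left_cancel₀ (show (ξ ^ 2 : ℝ) ≠ 0 from pow_ne_zero 2 hξ0.ne')
    linear_combination h4
  clear_value r
  have hm0 : 0 < y / x := div_pos hy0 hx0
  have hm1 : y / x < 1 := (div_lt_one hx0).mpr hyx
  -- the integrands
  set g : ℝ → ℝ := fun ψ =>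
    (2 * Real.sqrt (Real.cos ψ ^ 4 + 2 * η * Real.cos ψ ^ 2 + ξ ^ 2))⁻¹ with hgdef
  set k : ℝ → ℝ := fun u => (Real.sqrt (1 - y / x * Real.sin u ^ 2))⁻¹ with hkdef
  clear_value g k
  have hDpos : ∀ ψ, 0 < Real.cos ψ ^ 4 + 2 * η * Real.cos ψ ^ 2 + ξ ^ 2 := by
    intro ψ
    have h := dpos (t := Real.cos ψ ^ 2) hξ0 hη1 (sq_nonneg _) (Real.cos_sq_le_one ψ)
    nlinarith [h]
  have hgc : Continuous g := by
    rw [hgdef]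
    apply Continuous.inv₀
    · exact continuous_const.mul
        ((((Real.continuous_cos.pow 4).add
          (continuous_const.mul (Real.continuous_cos.pow 2))).add continuous_const).sqrt)
    · intro ψ
      have := hDpos ψ
      positivity
  have hkpos : ∀ u, 0 < 1 - y / x * Real.sin u ^ 2 := by
    intro u
    nlinarith [Real.sin_sq_le_one u, sq_nonneg (Real.sin u), hm0, hm1]
  have hkc : Continuous k := by
    rw [hkdef]
    apply Continuous.inv₀
    · exact (continuous_const.sub (continuous_const.mul (Real.continuous_sin.pow 2))).sqrt
    · intro u
      have := hkpos u
      positivity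
  have hQpos : ∀ θ : ℝ, 0 < Real.cos θ ^ 2 + r ^ 2 * Real.sin θ ^ 2 := by
    intro θ
    refine qpos (by positivity) ?_
    have := Real.sin_sq_add_cos_sq θ; linarith
  have hsub := intervalIntegral.integral_comp_smul_deriv
    (f := fun t : ℝ => t + Real.arctan ((r - 1) * Real.sin t * Real.cos t /
        (Real.cos t ^ 2 + r * Real.sin t ^ 2)))
    (f' := fun θ => r / (Real.cos θ ^ 2 + r ^ 2 * Real.sin θ ^ 2))
    (a := 0) (b := Real.pi) (g := g)
    (fun θ _ => lam_deriv hr0 θ)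
    (Continuous.continuousOn (continuous_const.div
      ((Real.continuous_cos.pow 2).add (continuous_const.mul (Real.continuous_sin.pow 2)))
      (fun θ => (hQpos θ).ne')))
    hgc
  simp only [Real.sin_zero, Real.sin_pi, mul_zero, zero_mul, zero_div, Real.arctan_zero,
    add_zero] at hsub
  have hkint : ∀ a b : ℝ, IntervalIntegrable k MeasureTheory.volume a b :=
    fun a b => hkc.intervalIntegrable a b
  have hkper : Function.Periodic k Real.pi := by
    intro u
    simp only [hkdef, Real.sin_add_pi, neg_sq]
  have hEK : ellipticK (y / x) = ∫ u in (0:ℝ)..Real.pi / 2, k u := by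
    unfold ellipticK
    simp only [hkdef]
  have h2 : ∫ u in (Real.pi / 2)..Real.pi, k u = ∫ u in (0:ℝ)..Real.pi / 2, k u := by
    have h := intervalIntegral.integral_comp_sub_left (a := (0:ℝ)) (b := Real.pi / 2) k Real.pi
    rw [sub_zero, show Real.pi - Real.pi / 2 = Real.pi / 2 by ring] at h
    rw [← h]
    apply intervalIntegral.integral_congr
    intro u _
    simp only [hkdef, Real.sin_pi_sub]
  have hhalf : ∫ u in (0:ℝ)..Real.pi, k u = 2 * ellipticK (y / x) := by
    rw [← intervalIntegral.integral_add_adjacent_intervals (hkint 0 (Real.pi / 2))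
      (hkint (Real.pi / 2) Real.pi), h2, hEK]
    ring
  have hper2 : ∫ u in Real.pi..2 * Real.pi, k u = ∫ u in (0:ℝ)..Real.pi, k u := by
    have h := hkper.intervalIntegral_add_eq Real.pi 0
    rw [zero_add] at h
    rw [show (2:ℝ) * Real.pi = Real.pi + Real.pi by ring]
    exact h
  have hsplit : ∫ u in (0:ℝ)..2 * Real.pi, k u = 4 * ellipticK (y / x) := by
    rw [← intervalIntegral.integral_add_adjacent_intervals (hkint 0 Real.pi)
      (hkint Real.pi (2 * Real.pi)), hper2, hhalf]
    ring
  have hcm := intervalIntegral.integral_comp_mul_left (a := (0:ℝ)) (b := Real.pi) k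
    (two_ne_zero (α := ℝ))
  rw [mul_zero] at hcm
  have hsqx : 0 < Real.sqrt x := Real.sqrt_pos.mpr hx0
  have step1 : (∫ ψ in (0:ℝ)..Real.pi, g ψ)
      = ∫ θ in (0:ℝ)..Real.pi,
          (fun θ => r / (Real.cos θ ^ 2 + r ^ 2 * Real.sin θ ^ 2)) θ •
          ((g ∘ fun t : ℝ => t + Real.arctan ((r - 1) * Real.sin t * Real.cos t /
            (Real.cos t ^ 2 + r * Real.sin t ^ 2))) θ) := hsub.symm
  have step2 : (∫ ψ in (0:ℝ)..Real.pi, g ψ)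
      = ∫ θ in (0:ℝ)..Real.pi, ((Real.sqrt x)⁻¹ * 2⁻¹) * k (2 * θ) := by
    rw [step1]
    apply intervalIntegral.integral_congr
    intro θ _
    simp only [Function.comp_apply, smul_eq_mul, hgdef, hkdef]
    exact pointwise θ hξ0 hx0 hy0 hyx hr0 hxr hA4 hy
  rw [step2, intervalIntegral.integral_const_mul, hcm, hsplit, smul_eq_mul]
  have hsqx' : Real.sqrt x ≠ 0 := hsqx.ne'
  field_simp
  ring



set_option maxHeartbeats 1000000 in
theorem stmt_14 (ξ η : ℝ) (hξ : ξ ∈ Set.Ioo (0 : ℝ) 1)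
    (hη : η ∈ Set.Ioo (-ξ) ξ)
    (x y T : ℝ) (hx : x = ξ * Real.sqrt (1 + ξ ^ 2 + 2 * η))
    (hy : y = (x - ξ ^ 2 - η) / 2)
    (hT : T = ellipticK (y / x) / Real.sqrt x)
    (n₀ φ : ℝ → ℝ) (hn : Differentiable ℝ n₀) (hφ : Differentiable ℝ φ)
    (hrange : ∀ τ, n₀ τ ∈ Set.Icc (0 : ℝ) 1)
    (heq1 : ∀ τ, deriv n₀ τ =
      4 * n₀ τ * (1 - n₀ τ) * Real.cos (φ τ) * Real.sin (φ τ))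
    (heq2 : ∀ τ, deriv φ τ =
      2 * ξ + 2 * (1 - 2 * n₀ τ) * Real.cos (φ τ) ^ 2)
    (henergy : hmf ξ (n₀ 0) (φ 0) = η) :
    ∀ τ : ℝ, n₀ (τ + T) = n₀ τ ∧ φ (τ + T) = φ τ + Real.pi := by
  obtain ⟨hξ0, hξ1⟩ := hξ
  obtain ⟨hη1, hη2⟩ := hη
  -- energy conservation
  have hE' : ∀ τ, HasDerivAt (fun t => ξ * (1 - 2 * n₀ t) -
      2 * n₀ t * (1 - n₀ t) * Real.cos (φ t) ^ 2) 0 τ := by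
    intro τ
    have Hn : HasDerivAt n₀ (4 * n₀ τ * (1 - n₀ τ) * Real.cos (φ τ) * Real.sin (φ τ)) τ := by
      have h := (hn τ).hasDerivAt; rwa [heq1 τ] at h
    have Hφ : HasDerivAt φ (2 * ξ + 2 * (1 - 2 * n₀ τ) * Real.cos (φ τ) ^ 2) τ := by
      have h := (hφ τ).hasDerivAt; rwa [heq2 τ] at h
    have Hc : HasDerivAt (fun t => Real.cos (φ t))
        (-Real.sin (φ τ) * (2 * ξ + 2 * (1 - 2 * n₀ τ) * Real.cos (φ τ) ^ 2)) τ :=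
      (Real.hasDerivAt_cos (φ τ)).comp τ Hφ
    have H := (((Hn.const_mul (2:ℝ)).const_sub (1:ℝ)).const_mul ξ).sub
      (((Hn.const_mul (2:ℝ)).mul (Hn.const_sub (1:ℝ))).mul (Hc.pow 2))
    refine H.congr_deriv (Eq.symm ?_)
    simp only [Pi.mul_apply, Pi.pow_apply]
    push_cast
    ring
  have hen : ∀ τ, ξ * (1 - 2 * n₀ τ) - 2 * n₀ τ * (1 - n₀ τ) * Real.cos (φ τ) ^ 2 = η := by
    intro τ
    have hconst := is_const_of_deriv_eq_zero (f := fun t => ξ * (1 - 2 * n₀ t) -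
        2 * n₀ t * (1 - n₀ t) * Real.cos (φ t) ^ 2)
      (fun t => (hE' t).differentiableAt) (fun t => (hE' t).deriv) τ 0
    have h0 : ξ * (1 - 2 * n₀ 0) - 2 * n₀ 0 * (1 - n₀ 0) * Real.cos (φ 0) ^ 2 = η := by
      simpa [hmf] using henergy
    linarith [hconst, h0]
  -- pointwise facts
  have hfact : ∀ τ, 0 < ξ + (1 - 2 * n₀ τ) * Real.cos (φ τ) ^ 2 ∧
      Real.sqrt (Real.cos (φ τ) ^ 4 + 2 * η * Real.cos (φ τ) ^ 2 + ξ ^ 2)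
        = ξ + (1 - 2 * n₀ τ) * Real.cos (φ τ) ^ 2 := by
    intro τ
    have henτ := hen τ
    have hcc0 : (0:ℝ) ≤ Real.cos (φ τ) ^ 2 := sq_nonneg _
    have hcc1 : Real.cos (φ τ) ^ 2 ≤ 1 := Real.cos_sq_le_one _
    have hn0 : 0 ≤ n₀ τ := (hrange τ).1
    have hn1 : n₀ τ ≤ 1 := (hrange τ).2
    have hprod : η + ξ = 2 * (1 - n₀ τ) * (ξ - n₀ τ * Real.cos (φ τ) ^ 2) := by
      linear_combination (-1 : ℝ) * henτ
    have h1n : 0 < 1 - n₀ τ := by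
      rcases eq_or_lt_of_le hn1 with h | h
      · exfalso; rw [h] at hprod; simp at hprod; linarith
      · linarith
    have hξn : 0 < ξ - n₀ τ * Real.cos (φ τ) ^ 2 := by nlinarith [hprod, h1n]
    have hpos : 0 < ξ + (1 - 2 * n₀ τ) * Real.cos (φ τ) ^ 2 := by
      nlinarith [mul_nonneg h1n.le hcc0]
    have hsq : (ξ + (1 - 2 * n₀ τ) * Real.cos (φ τ) ^ 2) ^ 2 =
        Real.cos (φ τ) ^ 4 + 2 * η * Real.cos (φ τ) ^ 2 + ξ ^ 2 := by
      linear_combination (2 * Real.cos (φ τ) ^ 2) * henτ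
    exact ⟨hpos, by rw [← hsq, Real.sqrt_sq hpos.le]⟩
  have hdφ : ∀ τ, deriv φ τ =
      2 * Real.sqrt (Real.cos (φ τ) ^ 4 + 2 * η * Real.cos (φ τ) ^ 2 + ξ ^ 2) := by
    intro τ
    rw [heq2 τ, (hfact τ).2]
    ring
  -- recovery of n₀ from φ
  set N : ℝ → ℝ := fun ψ => (1 - (Real.cos ψ ^ 2 + 2 * η) /
      (ξ + Real.sqrt (Real.cos ψ ^ 4 + 2 * η * Real.cos ψ ^ 2 + ξ ^ 2))) / 2 with hNdef
  have hNper : ∀ ψ, N (ψ + Real.pi) = N ψ := by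
    intro ψ
    simp only [hNdef, Real.cos_add_pi, Even.neg_pow (⟨1, rfl⟩ : Even 2),
      Even.neg_pow (⟨2, rfl⟩ : Even 4)]
  have hNeq : ∀ τ, n₀ τ = N (φ τ) := by
    intro τ
    obtain ⟨hpos, hsqrt⟩ := hfact τ
    simp only [hNdef]
    rw [hsqrt]
    have hden : (0:ℝ) < ξ + (ξ + (1 - 2 * n₀ τ) * Real.cos (φ τ) ^ 2) := by linarith
    have hDI := mul_inv_cancel₀ hden.ne'
    linear_combination (-(ξ + (ξ + (1 - 2 * n₀ τ) * Real.cos (φ τ) ^ 2))⁻¹) * hen τ +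
      ((1 - 2 * n₀ τ) / 2) * hDI
  -- the clock function G
  have hDpos : ∀ ψ, 0 < Real.cos ψ ^ 4 + 2 * η * Real.cos ψ ^ 2 + ξ ^ 2 := by
    intro ψ
    have h := dpos (t := Real.cos ψ ^ 2) hξ0 hη1 (sq_nonneg _) (Real.cos_sq_le_one ψ)
    nlinarith [h]
  set gI : ℝ → ℝ := fun ψ =>
    (2 * Real.sqrt (Real.cos ψ ^ 4 + 2 * η * Real.cos ψ ^ 2 + ξ ^ 2))⁻¹ with hgIdef
  have hgc : Continuous gI := by
    rw [hgIdef]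
    apply Continuous.inv₀
    · exact continuous_const.mul
        ((((Real.continuous_cos.pow 4).add
          (continuous_const.mul (Real.continuous_cos.pow 2))).add continuous_const).sqrt)
    · intro ψ
      have := hDpos ψ
      positivity
  have hgpos : ∀ ψ, 0 < gI ψ := by
    intro ψ
    rw [hgIdef]
    have := hDpos ψ
    positivity
  have hgper : Function.Periodic gI Real.pi := by
    intro u
    simp only [hgIdef, Real.cos_add_pi, Even.neg_pow (⟨1, rfl⟩ : Even 2),
      Even.neg_pow (⟨2, rfl⟩ : Even 4)]
  have hint : ∀ a b : ℝ, IntervalIntegrable gI MeasureTheory.volume a b :=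
    fun a b => hgc.intervalIntegrable a b
  set G : ℝ → ℝ := fun v => ∫ t in (0:ℝ)..v, gI t with hGdef
  have hG' : ∀ v, HasDerivAt G (gI v) v := by
    intro v
    rw [hGdef]
    exact (hgc.integral_hasStrictDerivAt 0 v).hasDerivAt
  have hGmono : StrictMono G := by
    apply strictMono_of_deriv_pos
    intro v
    rw [(hG' v).deriv]
    exact hgpos v
  have hWconst : ∀ τ, G (φ τ) - τ = G (φ 0) - 0 := by
    intro τ
    have hD : ∀ t : ℝ, HasDerivAt (fun t => G (φ t) - t) 0 t := by
      intro t
      have h := (((hG' (φ t)).comp t (hφ t).hasDerivAt).sub (hasDerivAt_id t))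
      have hval : gI (φ t) * deriv φ t - 1 = 0 := by
        rw [hdφ t, hgIdef]
        have h2 : (0:ℝ) < 2 * Real.sqrt (Real.cos (φ t) ^ 4 +
            2 * η * Real.cos (φ t) ^ 2 + ξ ^ 2) := by
          have := hDpos (φ t)
          positivity
        exact sub_eq_zero.mpr (inv_mul_cancel₀ h2.ne')
      rw [← hval]
      exact h
    exact is_const_of_deriv_eq_zero (fun t => (hD t).differentiableAt)
      (fun t => (hD t).deriv) τ 0
  have keyT : (∫ ψ in (0:ℝ)..Real.pi, gI ψ) = T := by
    rw [hgIdef, hT]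
    exact key_integral ξ η x y hξ0 hξ1 hη1 hη2 hx hy
  have hGshift : ∀ v, G (v + Real.pi) = G v + T := by
    intro v
    have h1 : G v + ∫ t in v..(v + Real.pi), gI t = G (v + Real.pi) := by
      rw [hGdef]
      exact intervalIntegral.integral_add_adjacent_intervals (hint 0 v) (hint v (v + Real.pi))
    have h2 : ∫ t in v..(v + Real.pi), gI t = ∫ t in (0:ℝ)..(0 + Real.pi), gI t :=
      hgper.intervalIntegral_add_eq v 0
    rw [zero_add] at h2
    rw [← h1, h2, keyT]
  intro τ
  have hφT : φ (τ + T) = φ τ + Real.pi := by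
    apply hGmono.injective
    have h1 := hWconst (τ + T)
    have h2 := hWconst τ
    have h3 := hGshift (φ τ)
    have : G (φ (τ + T)) = G (φ τ) + T := by linarith
    linarith [h3, this]
  refine ⟨?_, hφT⟩
  rw [hNeq (τ + T), hNeq τ, hφT, hNper]
end
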